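/- Let Λ : [t₀, t] → ℝ be differentiable with Λ(τ) > 0 for all τ, let K ≥ 0 satisfy |Λ'(τ)| ≤ K·Λ(τ)² for all τ ∈ [t₀, t], and set Λ̄ := (1/(t−t₀))·∫_{t₀}^{t} Λ(τ) dτ (with t > t₀). Assume K·(t−t₀)·Λ(t₀) < 1 and (3/2)·K·(t−t₀)·Λ̄ < 1. Then max_{τ∈[t₀,t]} Λ(τ) ≤ Λ̄/(1 − (3/2)·K·Λ̄·(t−t₀)). -/

import Mathlib

open MeasureTheory Set intervalIntegral

theorem stmt16 (t₀ t K : ℝ) (h01 : t₀ < t) (hK : 0 ≤ K) (Λ Λ' : ℝ → ℝ)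
    (hpos : ∀ τ ∈ Set.Icc t₀ t, 0 < Λ τ)
    (hderiv : ∀ τ ∈ Set.Icc t₀ t, HasDerivWithinAt Λ (Λ' τ) (Set.Icc t₀ t) τ)
    (hbound : ∀ τ ∈ Set.Icc t₀ t, |Λ' τ| ≤ K * Λ τ ^ 2)
    (h1 : K * (t - t₀) * Λ t₀ < 1)
    (h2 : 3 / 2 * K * (t - t₀) * ((∫ s in t₀..t, Λ s) / (t - t₀)) < 1) :
    ∀ τ ∈ Set.Icc t₀ t,
      Λ τ ≤ ((∫ s in t₀..t, Λ s) / (t - t₀)) /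
        (1 - 3 / 2 * K * ((∫ s in t₀..t, Λ s) / (t - t₀)) * (t - t₀)) := by
  have ht : t₀ ≤ t := h01.le
  have hΔ : (0:ℝ) < t - t₀ := sub_pos.2 h01
  set I : ℝ := ∫ s in t₀..t, Λ s with hIdef
  have hcont : ContinuousOn Λ (Set.Icc t₀ t) := fun τ hτ =>
    (hderiv τ hτ).continuousWithinAt
  have hint : IntervalIntegrable Λ volume t₀ t := by
    apply ContinuousOn.intervalIntegrable
    rwa [Set.uIcc_of_le ht]
  have hIpos : 0 < I :=
    intervalIntegral.intervalIntegral_pos_of_pos_on hint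
      (fun x hx => hpos x (Set.Ioo_subset_Icc_self hx)) h01
  -- maximum of Λ
  obtain ⟨τs, hτs, hmax⟩ := isCompact_Icc.exists_isMaxOn
    ⟨t₀, Set.left_mem_Icc.2 ht⟩ hcont
  set M : ℝ := Λ τs with hMdef
  have hM : ∀ σ ∈ Set.Icc t₀ t, Λ σ ≤ M := fun σ hσ => hmax hσ
  have hMpos : 0 < M := hpos τs hτs
  -- primitive F
  set F : ℝ → ℝ := fun τ => ∫ s in t₀..τ, Λ s with hFdef
  have hF0 : F t₀ = 0 := by simp [hFdef]
  have hFt : F t = I := rfl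
  have hFcont : ContinuousOn F (Set.Icc t₀ t) := by
    have h' : IntegrableOn Λ (Set.uIcc t₀ t) volume := by
      rw [Set.uIcc_of_le ht]; exact hcont.integrableOn_Icc
    have := intervalIntegral.continuousOn_primitive_interval (a := t₀) (b := t)
      (f := Λ) (μ := volume) h'
    rwa [Set.uIcc_of_le ht] at this
  have hFderiv : ∀ x ∈ Set.Ioo t₀ t, HasDerivAt F (Λ x) x := by
    intro x hx
    have hmem : Set.Icc t₀ t ∈ nhds x := Icc_mem_nhds hx.1 hx.2
    refine intervalIntegral.integral_hasDerivAt_right ?_ ?_ ?_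
    · exact hint.mono_set (by
        rw [Set.uIcc_of_le ht, Set.uIcc_of_le hx.1.le]
        exact Set.Icc_subset_Icc le_rfl hx.2.le)
    · exact (hcont.mono Set.Ioo_subset_Icc_self).stronglyMeasurableAtFilter
        isOpen_Ioo x hx
    · exact hcont.continuousAt hmem
  -- F is monotone on Icc
  have hFmono : MonotoneOn F (Set.Icc t₀ t) := by
    refine monotoneOn_of_hasDerivWithinAt_nonneg (convex_Icc t₀ t) hFcont
      (f' := Λ) (fun x hx => ?_) (fun x hx => ?_)
    · rw [interior_Icc] at hx ⊢
      exact (hFderiv x hx).hasDerivWithinAt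
    · rw [interior_Icc] at hx
      exact (hpos x (Set.Ioo_subset_Icc_self hx)).le
  -- key pointwise estimate: Λ τ ≤ Λ σ + K * M * I for all τ σ ∈ Icc
  have key : ∀ τ ∈ Set.Icc t₀ t, ∀ σ ∈ Set.Icc t₀ t, Λ τ ≤ Λ σ + K * M * I := by
    have hg : AntitoneOn (fun τ => Λ τ - K * M * F τ) (Set.Icc t₀ t) := by
      refine antitoneOn_of_hasDerivWithinAt_nonpos (convex_Icc t₀ t)
        (hcont.sub (continuousOn_const.mul hFcont))
        (f' := fun x => Λ' x - K * M * Λ x) (fun x hx => ?_) (fun x hx => ?_)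
      · rw [interior_Icc] at hx ⊢
        exact ((hderiv x (Set.Ioo_subset_Icc_self hx)).mono Set.Ioo_subset_Icc_self).sub
          (((hFderiv x hx).hasDerivWithinAt).const_mul (K * M))
      · rw [interior_Icc] at hx
        have hx' := Set.Ioo_subset_Icc_self hx
        have h1 := (le_abs_self (Λ' x)).trans (hbound x hx')
        have h2 := hM x hx'
        have h3 := (hpos x hx').le
        show Λ' x - K * M * Λ x ≤ 0
        nlinarith [mul_nonneg hK (mul_nonneg h3 (sub_nonneg.2 h2))]
    have hh : MonotoneOn (fun τ => Λ τ + K * M * F τ) (Set.Icc t₀ t) := by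
      refine monotoneOn_of_hasDerivWithinAt_nonneg (convex_Icc t₀ t)
        (hcont.add (continuousOn_const.mul hFcont))
        (f' := fun x => Λ' x + K * M * Λ x) (fun x hx => ?_) (fun x hx => ?_)
      · rw [interior_Icc] at hx ⊢
        exact ((hderiv x (Set.Ioo_subset_Icc_self hx)).mono Set.Ioo_subset_Icc_self).add
          (((hFderiv x hx).hasDerivWithinAt).const_mul (K * M))
      · rw [interior_Icc] at hx
        have hx' := Set.Ioo_subset_Icc_self hx
        have h1 := (neg_abs_le (Λ' x)).trans' (neg_le_neg (hbound x hx'))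
        have h2 := hM x hx'
        have h3 := (hpos x hx').le
        show 0 ≤ Λ' x + K * M * Λ x
        nlinarith [mul_nonneg hK (mul_nonneg h3 (sub_nonneg.2 h2))]
    intro τ hτ σ hσ
    have hF1 : 0 ≤ F σ := by rw [← hF0]; exact hFmono (Set.left_mem_Icc.2 ht) hσ hσ.1
    have hF2 : F τ ≤ I := by rw [← hFt]; exact hFmono hτ (Set.right_mem_Icc.2 ht) hτ.2
    have hF3 : 0 ≤ F τ := by rw [← hF0]; exact hFmono (Set.left_mem_Icc.2 ht) hτ hτ.1
    have hF4 : F σ ≤ I := by rw [← hFt]; exact hFmono hσ (Set.right_mem_Icc.2 ht) hσ.2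
    have hKM : 0 ≤ K * M := mul_nonneg hK hMpos.le
    rcases le_total σ τ with h | h
    · have := hg hσ hτ h
      simp only at this
      nlinarith
    · have := hh hτ hσ h
      simp only at this
      nlinarith
  -- integrate over σ
  have havg : ∀ τ ∈ Set.Icc t₀ t, Λ τ ≤ I / (t - t₀) + K * M * I := by
    intro τ hτ
    have hmono : (∫ _ in t₀..t, (Λ τ - K * M * I)) ≤ ∫ σ in t₀..t, Λ σ :=
      intervalIntegral.integral_mono_on ht intervalIntegrable_const hint
        (fun σ hσ => by have := key τ hτ σ hσ; linarith)
    rw [intervalIntegral.integral_const, smul_eq_mul] at hmono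
    rw [div_add' _ _ _ hΔ.ne', le_div_iff₀ hΔ]
    nlinarith
  -- conclude
  intro τ hτ
  have hMle : M ≤ I / (t - t₀) + K * M * I := havg τs hτs
  set A : ℝ := I / (t - t₀) with hAdef
  have hApos : 0 < A := div_pos hIpos hΔ
  have hIA : I = A * (t - t₀) := by rw [hAdef, div_mul_cancel₀ _ hΔ.ne']
  have hden : 0 < 1 - 3 / 2 * K * A * (t - t₀) := by nlinarith
  rw [le_div_iff₀ hden]
  calc Λ τ * (1 - 3 / 2 * K * A * (t - t₀)) ≤ M * (1 - 3 / 2 * K * A * (t - t₀)) := by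
        exact mul_le_mul_of_nonneg_right (hM τ hτ) hden.le
    _ ≤ A := by nlinarith [mul_nonneg (mul_nonneg hK hMpos.le) (mul_nonneg hApos.le hΔ.le)]
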